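/- Let κ be a regular uncountable cardinal and assume principle E⁻(κ). Then for every family 𝓐 of subsets of ℕ with |𝓐| = κ, either (a) there is a natural number k ≥ 1 such that the set I_k(𝓐) = {⋂𝓐' : 𝓐' is a k-element subfamily of 𝓐} has cardinality κ, or (b) there is a subfamily 𝓑 ⊆ 𝓐 of cardinality κ such that I_{<ω}(𝓑) = ⋃_{k≥1} I_k(𝓑) is countable. -/

import Mathlib

open Cardinal

/-- `C` is closed and unbounded (club) in the ordinal `o`. -/
def ClubIn (o : Ordinal) (C : Set Ordinal) : Prop :=
  C ⊆ Set.Iio o ∧ (∀ α < o, ∃ β ∈ C, α < β) ∧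
    ∀ α < o, 0 < α → (∀ β < α, ∃ γ ∈ C, β < γ ∧ γ < α) → α ∈ C

/-- `S` is a stationary subset of the ordinal `o`: it meets every club subset of `o`. -/
def StationaryIn (o : Ordinal) (S : Set Ordinal) : Prop :=
  S ⊆ Set.Iio o ∧ ∀ C, ClubIn o C → (S ∩ C).Nonempty

/-- `S` is a cofinal (unbounded) subset of the ordinal `o`. -/
def CofinalIn (o : Ordinal) (S : Set Ordinal) : Prop :=
  S ⊆ Set.Iio o ∧ ∀ α < o, ∃ β ∈ S, α < β

/-- For a matrix `A` of subsets of `ℕ`, a finite sequence `t ∈ ω^{<ω}` and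
`s : {0,…,|t|-1} → Ordinal`, this is `A[s,t] = ⋂_{i<|t|} A(s i, t i)`. -/
def MatInt (A : Ordinal → ℕ → Set ℕ) (t : List ℕ) (s : Fin t.length → Ordinal) : Set ℕ :=
  ⋂ i, A (s i) (t.get i)
/-- Principle E⁻(κ). -/
def PrincipleEminus (κ : Cardinal) : Prop :=
  ∀ (T : Set (List ℕ)) (A : Ordinal → ℕ → Set ℕ),
    (∃ S : Set Ordinal, CofinalIn κ.ord S ∧
      {X : Set ℕ | ∃ t ∈ T, ∃ s : Fin (List.length t) → Ordinal,
        Function.Injective s ∧ (∀ i, s i ∈ S) ∧ X = MatInt A t s}.Countable) ∨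
    (∃ t ∈ T, ∃ D : Fin t.length → Set Ordinal,
      (∀ i, CofinalIn κ.ord (D i)) ∧
      ∀ s₀ s₁ : Fin t.length → Ordinal, Function.Injective s₀ → Function.Injective s₁ →
        (∀ i, s₀ i ∈ D i) → (∀ i, s₁ i ∈ D i) → (∀ i, s₀ i ≠ s₁ i) →
          MatInt A t s₀ ≠ MatInt A t s₁)

/-- `I_k(𝓐)`: the set of intersections of k-element subfamilies of 𝓐. -/
def Ik (𝓐 : Set (Set ℕ)) (k : ℕ) : Set (Set ℕ) :=
  {X : Set ℕ | ∃ F : Finset (Set ℕ), ↑F ⊆ 𝓐 ∧ F.card = k ∧ X = ⋂₀ (F : Set (Set ℕ))}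

namespace St16

noncomputable def chainW (nxt : ℕ → Ordinal → Ordinal) (b : Ordinal) : ℕ → Ordinal
  | 0 => nxt 0 b
  | n + 1 => nxt (n + 1) (chainW nxt b n)

noncomputable def gTop (nxt : ℕ → Ordinal → Ordinal) (k : ℕ) : Ordinal → Ordinal :=
  WellFounded.fix Ordinal.lt_wf fun ξ IH =>
    chainW nxt (⨆ x : ξ.ToType, IH ((Ordinal.ToType.mk (o := ξ)).symm x).1
      ((Ordinal.ToType.mk (o := ξ)).symm x).2 + 1) k

noncomputable def bOf (nxt : ℕ → Ordinal → Ordinal) (k : ℕ) (ξ : Ordinal) : Ordinal :=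
  ⨆ x : ξ.ToType, gTop nxt k ((Ordinal.ToType.mk (o := ξ)).symm x).1 + 1

lemma gTop_eq (nxt : ℕ → Ordinal → Ordinal) (k : ℕ) (ξ : Ordinal) :
    gTop nxt k ξ = chainW nxt (bOf nxt k ξ) k := by
  rw [gTop, WellFounded.fix_eq]
  rfl

lemma chainW_zero (nxt : ℕ → Ordinal → Ordinal) (b : Ordinal) : chainW nxt b 0 = nxt 0 b := rfl

lemma chainW_succ (nxt : ℕ → Ordinal → Ordinal) (b : Ordinal) (n : ℕ) :
    chainW nxt b (n + 1) = nxt (n + 1) (chainW nxt b n) := rfl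

lemma Ik_card_le {𝓐 : Set (Set ℕ)} {κ : Cardinal.{0}} (hcard : #𝓐 = κ) (hinf : ℵ₀ ≤ κ)
    (k : ℕ) : #(Ik 𝓐 k) ≤ κ := by
  classical
  have hinf' : Infinite ↥𝓐 := by
    rw [Cardinal.infinite_iff, hcard]; exact hinf
  have hsub : Ik 𝓐 k ⊆
      Set.range (fun F : Finset ↥𝓐 => ⋂₀ ((fun a : ↥𝓐 => (a : Set ℕ)) '' ↑F)) := by
    rintro X ⟨F, hF𝓐, hFcard, rfl⟩
    refine ⟨F.subtype (· ∈ 𝓐), ?_⟩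
    have himg : (fun a : ↥𝓐 => (a : Set ℕ)) '' ↑(F.subtype (· ∈ 𝓐)) = ↑F := by
      ext x
      simp only [Set.mem_image, Finset.mem_coe, Finset.mem_subtype]
      constructor
      · rintro ⟨a, ha, rfl⟩; exact ha
      · intro hx; exact ⟨⟨x, hF𝓐 hx⟩, hx, rfl⟩
    show ⋂₀ ((fun a : ↥𝓐 => (a : Set ℕ)) '' ↑(F.subtype (· ∈ 𝓐))) = ⋂₀ (F : Set (Set ℕ))
    rw [himg]
  calc #(Ik 𝓐 k) ≤ _ := Cardinal.mk_le_mk_of_subset hsub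
    _ ≤ #(Finset ↥𝓐) := Cardinal.mk_range_le
    _ = #↥𝓐 := Cardinal.mk_finset_of_infinite _
    _ = κ := hcard

end St16

/-- Under E⁻(κ), for any κ-sized family 𝓐 of subsets of ℕ, either `I_k(𝓐)` has
cardinality κ for some `k ≥ 1`, or some κ-sized subfamily 𝓑 has
`I_{<ω}(𝓑) = ⋃_{k ≥ 1} I_k(𝓑)` countable. -/
theorem statement_16 (κ : Cardinal.{0}) (hreg : κ.IsRegular) (hunc : ℵ₀ < κ)
    (hE : PrincipleEminus κ)
    (𝓐 : Set (Set ℕ)) (hcard : #𝓐 = κ) :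
    (∃ k : ℕ, 1 ≤ k ∧ #(Ik 𝓐 k) = κ) ∨
    (∃ 𝓑 ⊆ 𝓐, #𝓑 = κ ∧ (⋃ k ∈ {k : ℕ | 1 ≤ k}, Ik 𝓑 k).Countable) := by
  classical
  have hlimit : Order.IsSuccLimit κ.ord := Cardinal.isSuccLimit_ord hreg.1
  -- enumeration of 𝓐 by ordinals below κ.ord
  have hA_card : #(κ.ord.ToType) = #↥𝓐 := by
    rw [Cardinal.mk_toType, Cardinal.card_ord, hcard]
  obtain ⟨e⟩ := Cardinal.eq.mp hA_card
  set f : Ordinal → Set ℕ := fun α =>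
    if h : α < κ.ord then (e (Ordinal.ToType.mk (o := κ.ord) ⟨α, h⟩) : Set ℕ) else ∅ with hf
  have hf_mem : ∀ α, α < κ.ord → f α ∈ 𝓐 := by
    intro α h
    simp only [hf, dif_pos h]
    exact (e (Ordinal.ToType.mk (o := κ.ord) ⟨α, h⟩)).2
  have hf_inj : ∀ α β, α < κ.ord → β < κ.ord → f α = f β → α = β := by
    intro α β hα hβ hfab
    simp only [hf, dif_pos hα, dif_pos hβ] at hfab
    have h1 := e.injective (Subtype.ext hfab)
    have h2 := (Ordinal.ToType.mk (o := κ.ord)).injective h1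
    exact congrArg Subtype.val h2
  set A : Ordinal → ℕ → Set ℕ := fun α _ => f α with hA
  have hMat : ∀ (t : List ℕ) (s : Fin t.length → Ordinal), MatInt A t s = ⋂ i, f (s i) := by
    intro t s; rfl
  rcases hE Set.univ A with ⟨S, hScof, hCnt⟩ | ⟨t, -, D, hD, hsep⟩
  · -- Case 1: produce a κ-sized subfamily with countable I_{<ω}
    right
    have hBsub : f '' S ⊆ 𝓐 := by
      rintro _ ⟨α, hαS, rfl⟩
      exact hf_mem α (hScof.1 hαS)
    refine ⟨f '' S, hBsub, ?_, ?_⟩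
    · -- cardinality κ
      have hle : #↥(f '' S) ≤ κ := hcard ▸ Cardinal.mk_le_mk_of_subset hBsub
      refine le_antisymm hle ?_
      by_contra hlt
      push_neg at hlt
      have hpick : ∀ b : ↥(f '' S), ∃ α, α ∈ S ∧ f α = (b : Set ℕ) := by
        rintro ⟨b, α, hα, rfl⟩
        exact ⟨α, hα, rfl⟩
      choose h hh1 hh2 using hpick
      have hlt' : ∀ b, h b < κ.ord := fun b => hScof.1 (hh1 b)
      have hsup : (⨆ b, h b) < κ.ord :=
        Cardinal.iSup_lt_ord_of_isRegular hreg hlt hlt'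
      obtain ⟨β, hβS, hβ⟩ := hScof.2 _ hsup
      have hββ : β ≤ ⨆ b, h b := by
        have hβb : h ⟨f β, ⟨β, hβS, rfl⟩⟩ = β :=
          hf_inj _ _ (hScof.1 (hh1 _)) (hScof.1 hβS) (hh2 _)
        calc β = h ⟨f β, ⟨β, hβS, rfl⟩⟩ := hβb.symm
          _ ≤ ⨆ b, h b := le_ciSup (Ordinal.bddAbove_range _) _
      exact absurd hβ (not_lt.mpr hββ)
    · -- countability
      apply hCnt.mono
      intro X hX
      simp only [Set.mem_iUnion, Set.mem_setOf_eq] at hX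
      obtain ⟨k, hk1, F, hFB, hFcard, rfl⟩ := hX
      have hidx : ∀ x : ↥F, ∃ α, α ∈ S ∧ f α = (x : Set ℕ) := fun x => by
        obtain ⟨α, hα, hfa⟩ := hFB x.2
        exact ⟨α, hα, hfa⟩
      choose idx hidx1 hidx2 using hidx
      have hlen : (List.replicate k 0).length = F.card := by
        rw [List.length_replicate, hFcard]
      refine ⟨List.replicate k 0, trivial,
        fun i => idx (F.equivFin.symm (Fin.cast hlen i)), ?_, ?_, ?_⟩
      · intro i j hij
        have hij' : idx (F.equivFin.symm (Fin.cast hlen i))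
            = idx (F.equivFin.symm (Fin.cast hlen j)) := hij
        have h2 : ((F.equivFin.symm (Fin.cast hlen i) : ↥F) : Set ℕ)
            = ((F.equivFin.symm (Fin.cast hlen j) : ↥F) : Set ℕ) :=
          (hidx2 _).symm.trans ((congrArg f hij').trans (hidx2 _))
        have h4 := F.equivFin.symm.injective (Subtype.ext h2)
        have h5 := congrArg Fin.val h4
        exact Fin.ext h5
      · intro i
        exact hidx1 _
      · rw [hMat]
        ext n
        simp only [Set.mem_sInter, Set.mem_iInter, Finset.mem_coe]
        constructor
        · intro hn i
          rw [hidx2]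
          exact hn _ (F.equivFin.symm (Fin.cast hlen i)).2
        · intro hn x hx
          have hi : F.equivFin.symm (Fin.cast hlen
              (Fin.cast hlen.symm (F.equivFin ⟨x, hx⟩))) = ⟨x, hx⟩ := by
            rw [show Fin.cast hlen (Fin.cast hlen.symm (F.equivFin ⟨x, hx⟩))
                = F.equivFin ⟨x, hx⟩ from Fin.ext rfl]
            exact F.equivFin.symm_apply_apply _
          have := hn (Fin.cast hlen.symm (F.equivFin ⟨x, hx⟩))
          rw [hidx2, hi] at this
          exact this
  · -- Case 2: some I_k has cardinality κ
    left
    rcases Nat.eq_zero_or_pos t.length with h0 | hkpos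
    · exfalso
      haveI : IsEmpty (Fin t.length) := by rw [h0]; exact Fin.isEmpty
      exact hsep (fun _ => 0) (fun _ => 0)
        (Function.injective_of_subsingleton _) (Function.injective_of_subsingleton _)
        (fun i => (IsEmpty.false i).elim) (fun i => (IsEmpty.false i).elim)
        (fun i => (IsEmpty.false i).elim) rfl
    -- choice of "next" elements
    have hnxt_ex : ∀ (n : ℕ) (b : Ordinal), ∃ y, b < κ.ord →
        ((∀ h : n < t.length, y ∈ D ⟨n, h⟩) ∧ b < y ∧ y < κ.ord) := by
      intro n b
      by_cases hb : b < κ.ord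
      · by_cases hn : n < t.length
        · obtain ⟨y, hyD, hy⟩ := (hD ⟨n, hn⟩).2 b hb
          exact ⟨y, fun _ => ⟨fun _ => hyD, hy, (hD ⟨n, hn⟩).1 hyD⟩⟩
        · refine ⟨b + 1, fun _ => ⟨fun h => absurd h hn, ?_, ?_⟩⟩
          · rw [Ordinal.add_one_eq_succ]; exact Order.lt_succ _
          · rw [Ordinal.add_one_eq_succ]; exact hlimit.succ_lt hb
      · exact ⟨0, fun h => absurd h hb⟩
    choose nxt hnxt using hnxt_ex
    -- properties of the chain
    have hchain : ∀ b, b < κ.ord → ∀ n,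
        (∀ h : n < t.length, St16.chainW nxt b n ∈ D ⟨n, h⟩) ∧
        b < St16.chainW nxt b n ∧ St16.chainW nxt b n < κ.ord := by
      intro b hb n
      induction n with
      | zero =>
        obtain ⟨h1, h2, h3⟩ := hnxt 0 b hb
        exact ⟨h1, h2, h3⟩
      | succ n ih =>
        obtain ⟨h1, h2, h3⟩ := hnxt (n + 1) _ ih.2.2
        exact ⟨h1, lt_trans ih.2.1 h2, h3⟩
    have hchain_mono : ∀ b, b < κ.ord → ∀ m n, m < n →
        St16.chainW nxt b m < St16.chainW nxt b n := by
      intro b hb m n hmn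
      induction n with
      | zero => exact absurd hmn (Nat.not_lt_zero m)
      | succ n ih =>
        have hstep : St16.chainW nxt b n < St16.chainW nxt b (n + 1) :=
          (hnxt (n + 1) _ (hchain b hb n).2.2).2.1
        rcases Nat.lt_succ_iff_lt_or_eq.mp hmn with h | h
        · exact (ih h).trans hstep
        · rw [h]; exact hstep
    -- the bound at each stage stays below κ.ord
    have hball : ∀ ξ, ξ < κ.ord → St16.bOf nxt t.length ξ < κ.ord := by
      intro ξ
      induction ξ using Ordinal.induction with
      | h ξ IH =>
        intro hξ
        rw [St16.bOf]
        apply Cardinal.iSup_lt_ord_of_isRegular hreg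
        · rw [Cardinal.mk_toType]; exact Cardinal.lt_ord.mp hξ
        · intro x
          have hη : ((Ordinal.ToType.mk (o := ξ)).symm x).1 < ξ :=
            ((Ordinal.ToType.mk (o := ξ)).symm x).2
          have hb := IH _ hη (hη.trans hξ)
          have hgt : St16.gTop nxt t.length ((Ordinal.ToType.mk (o := ξ)).symm x).1 < κ.ord := by
            rw [St16.gTop_eq]; exact (hchain _ hb t.length).2.2
          rw [Ordinal.add_one_eq_succ]
          exact hlimit.succ_lt hgt
    have hsep_stage : ∀ η ξ, η < ξ → St16.gTop nxt t.length η < St16.bOf nxt t.length ξ := by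
      intro η ξ hηξ
      have hle : St16.gTop nxt t.length η + 1 ≤ St16.bOf nxt t.length ξ := by
        have h := le_ciSup (Ordinal.bddAbove_range
          (fun x : ξ.ToType => St16.gTop nxt t.length ((Ordinal.ToType.mk (o := ξ)).symm x).1 + 1))
          (Ordinal.ToType.mk (o := ξ) ⟨η, hηξ⟩)
        rw [St16.bOf]
        simpa using h
      calc St16.gTop nxt t.length η < St16.gTop nxt t.length η + 1 := by
            rw [Ordinal.add_one_eq_succ]; exact Order.lt_succ _
        _ ≤ St16.bOf nxt t.length ξ := hle
    -- the selectors
    set s : Ordinal → Fin t.length → Ordinal :=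
      fun ξ i => St16.chainW nxt (St16.bOf nxt t.length ξ) i.1 with hs
    have hs_lt : ∀ ξ, ξ < κ.ord → ∀ i : Fin t.length, s ξ i < κ.ord :=
      fun ξ hξ i => (hchain _ (hball ξ hξ) i.1).2.2
    have hs_mem : ∀ ξ, ξ < κ.ord → ∀ i : Fin t.length, s ξ i ∈ D i :=
      fun ξ hξ i => (hchain _ (hball ξ hξ) i.1).1 i.2
    have hs_inj : ∀ ξ, ξ < κ.ord → Function.Injective (s ξ) := by
      intro ξ hξ i j hij
      rcases lt_trichotomy i.1 j.1 with h | h | h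
      · exact absurd hij (ne_of_lt (hchain_mono _ (hball ξ hξ) _ _ h))
      · exact Fin.ext h
      · exact absurd hij.symm (ne_of_lt (hchain_mono _ (hball ξ hξ) _ _ h))
    have hcross : ∀ η ξ, η < ξ → ξ < κ.ord → ∀ i j : Fin t.length, s η i < s ξ j := by
      intro η ξ hηξ hξ i j
      have hηκ := hηξ.trans hξ
      have h1 : s η i ≤ St16.gTop nxt t.length η := by
        rw [St16.gTop_eq]
        exact le_of_lt (hchain_mono _ (hball η hηκ) _ _ i.2)
      have h2 := hsep_stage η ξ hηξ
      have h3 : St16.bOf nxt t.length ξ < s ξ j := (hchain _ (hball ξ hξ) j.1).2.1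
      exact lt_of_le_of_lt h1 (h2.trans h3)
    have hMdist : ∀ η ξ, η < ξ → ξ < κ.ord → MatInt A t (s η) ≠ MatInt A t (s ξ) := by
      intro η ξ hηξ hξ
      exact hsep (s η) (s ξ) (hs_inj η (hηξ.trans hξ)) (hs_inj ξ hξ)
        (hs_mem η (hηξ.trans hξ)) (hs_mem ξ hξ)
        (fun i => ne_of_lt (hcross η ξ hηξ hξ i i))
    have hmem : ∀ ξ, ξ < κ.ord → MatInt A t (s ξ) ∈ Ik 𝓐 t.length := by
      intro ξ hξ
      have hinj2 : Function.Injective fun i : Fin t.length => f (s ξ i) := by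
        intro i j hij
        exact hs_inj ξ hξ (hf_inj _ _ (hs_lt ξ hξ i) (hs_lt ξ hξ j) hij)
      refine ⟨Finset.image (fun i => f (s ξ i)) Finset.univ, ?_, ?_, ?_⟩
      · intro x hx
        simp only [Finset.coe_image, Finset.coe_univ, Set.image_univ, Set.mem_range] at hx
        obtain ⟨i, rfl⟩ := hx
        exact hf_mem _ (hs_lt ξ hξ i)
      · rw [Finset.card_image_of_injective _ hinj2, Finset.card_univ, Fintype.card_fin]
      · rw [hMat, Finset.coe_image, Finset.coe_univ, Set.image_univ, Set.sInter_range]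
    refine ⟨t.length, hkpos, le_antisymm (St16.Ik_card_le hcard hreg.1 _) ?_⟩
    have hmap : ∀ x : κ.ord.ToType,
        MatInt A t (s (((Ordinal.ToType.mk (o := κ.ord)).symm x) : Ordinal)) ∈ Ik 𝓐 t.length :=
      fun x => hmem _ ((Ordinal.ToType.mk (o := κ.ord)).symm x).2
    have hinj : Function.Injective (fun x : κ.ord.ToType =>
        (⟨MatInt A t (s (((Ordinal.ToType.mk (o := κ.ord)).symm x) : Ordinal)), hmap x⟩ :
          ↥(Ik 𝓐 t.length))) := by
      intro x y hxy
      have h2 : MatInt A t (s (((Ordinal.ToType.mk (o := κ.ord)).symm x) : Ordinal))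
          = MatInt A t (s (((Ordinal.ToType.mk (o := κ.ord)).symm y) : Ordinal)) :=
        congrArg Subtype.val hxy
      have hαβ : (((Ordinal.ToType.mk (o := κ.ord)).symm x) : Ordinal)
          = (((Ordinal.ToType.mk (o := κ.ord)).symm y) : Ordinal) := by
        rcases lt_trichotomy (((Ordinal.ToType.mk (o := κ.ord)).symm x) : Ordinal)
          (((Ordinal.ToType.mk (o := κ.ord)).symm y) : Ordinal) with h | h | h
        · exact absurd h2 (hMdist _ _ h ((Ordinal.ToType.mk (o := κ.ord)).symm y).2)
        · exact h
        · exact absurd h2.symm (hMdist _ _ h ((Ordinal.ToType.mk (o := κ.ord)).symm x).2)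
      have := (Ordinal.ToType.mk (o := κ.ord)).symm.injective (Subtype.ext hαβ)
      exact this
    calc κ = #κ.ord.ToType := by rw [Cardinal.mk_toType, Cardinal.card_ord]
      _ ≤ #(Ik 𝓐 t.length) := Cardinal.mk_le_of_injective hinj
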